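/- arXiv:1502.04904 — 2 statements merged into one kernel-verified Lean document; each statement's English description precedes it below -/
import Mathlib

section
/- Assume S⁰, S¹ : X^{++} → ℤ[X] with {S⁰_μ : μ ∈ X^{++}} linearly independent over ℤ, S¹_ζ = Σ_μ x_{μ,ζ} S⁰_μ, and the factorization S¹_ζ = S¹_{ζ^0+pρ}·(S⁰_{ζ^1+pζ^2+⋯})^{(1)} whenever ζ^1+pζ^2+⋯ ∈ X^{++}. Define S^h inductively by S^h_ζ = Σ_μ x_{μ, ζ^{h−1}+pζ^h+⋯} S^{h−1}_{ζ^0+⋯+p^{h−2}ζ^{h−2}+p^{h−1}μ}. Then for all h ≥ 1 and ζ ∈ X^+ with ζ^h + pζ^{h+1} + p²ζ^{h+2} + ⋯ ∈ X^{++}: S^h_ζ = S¹_{ζ^0+pρ}·(S¹_{ζ^1+pρ})^{(1)} ⋯ (S¹_{ζ^{h−1}+pρ})^{(h−1)} · (S⁰_{ζ^h+pζ^{h+1}+⋯})^{(h)}. -/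
open Finset

/-- Base-`p` digit number `k` of a weight `ζ ∈ ℤ^I` (coordinatewise). -/
def digit (p k : ℕ) {I : Type*} (ζ : I → ℤ) : I → ℤ :=
  fun i => (ζ i / (p : ℤ) ^ k) % (p : ℤ)

/-- The truncated tail `ζ^j + p ζ^{j+1} + p² ζ^{j+2} + ⋯` of the base-`p` expansion. -/
noncomputable def tailFrom (p j : ℕ) {I : Type*} (ζ : I → ℤ) : I → ℤ :=
  fun i => ∑ᶠ k : ℕ, (p : ℤ) ^ k * digit p (j + k) ζ i

/-- Dominant weights `X^+`. -/
def dominant {I : Type*} (ζ : I → ℤ) : Prop := ∀ i, 0 ≤ ζ i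

/-- Strictly dominant weights `X^{++} = X^+ + ρ`. -/
def strictDom {I : Type*} (ζ : I → ℤ) : Prop := ∀ i, 1 ≤ ζ i

/-- `p`-restricted weights `X^+_red`. -/
def restricted (p : ℕ) {I : Type*} (ζ : I → ℤ) : Prop :=
  ∀ i, 0 ≤ ζ i ∧ ζ i ≤ (p : ℤ) - 1

/-- The Weyl vector `ρ` (all coordinates equal to `1` in fundamental weight coordinates). -/
def rho {I : Type*} : I → ℤ := fun _ => 1

/-- The Frobenius twist `ξ ↦ ξ^{(h)}`, sending `e^λ` to `e^{p^h λ}`, as a ring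
homomorphism of the group ring `ℤ[X]`, `X = ℤ^I`. -/
noncomputable def twist (p h : ℕ) {I : Type*} :
    AddMonoidAlgebra ℤ (I → ℤ) →+* AddMonoidAlgebra ℤ (I → ℤ) :=
  AddMonoidAlgebra.mapDomainRingHom ℤ
    (AddMonoidHom.mk' (fun l => ((p : ℤ) ^ h) • l) (fun a b => smul_add _ a b))

/-- The functions `S^h` of no. 4 of the paper, defined inductively from `S¹` by
`S^h_ζ = Σ_{μ ∈ X^{++}} x_{μ, ζ^{h−1}+pζ^h+⋯} · S^{h−1}_{ζ^0+pζ^1+⋯+p^{h−2}ζ^{h−2}+p^{h−1}μ}`,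
where `x_{μ,ζ}` are the coefficients of `S¹` in the basis `S⁰` (extended by zero off
`X^{++}`); by convention `S^0 := S¹`. -/
noncomputable def Sh {I : Type*} (p : ℕ) (x : (I → ℤ) → (I → ℤ) → ℤ)
    (S1 : (I → ℤ) → AddMonoidAlgebra ℤ (I → ℤ)) :
    ℕ → (I → ℤ) → AddMonoidAlgebra ℤ (I → ℤ)
  | 0 => S1
  | 1 => S1
  | (h + 2) => fun ζ => ∑ᶠ μ : I → ℤ, x μ (tailFrom p (h + 1) ζ) •
      Sh p x S1 (h + 1)
        ((∑ j ∈ Finset.range (h + 1), (p : ℤ) ^ j • digit p j ζ) + (p : ℤ) ^ (h + 1) • μ)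

section AuxInt

variable {p : ℕ}

private lemma P_pos (hp : 2 ≤ p) : (0 : ℤ) < (p : ℤ) := by exact_mod_cast (by omega : 0 < p)

private lemma ediv_pow_ediv {n : ℤ} (hn : 0 ≤ n) (j k : ℕ) :
    n / (p : ℤ) ^ j / (p : ℤ) ^ k = n / (p : ℤ) ^ (j + k) := by
  lift n to ℕ using hn
  have h1 : ((p : ℤ)) ^ j = ((p ^ j : ℕ) : ℤ) := by push_cast; ring
  have h2 : ((p : ℤ)) ^ k = ((p ^ k : ℕ) : ℤ) := by push_cast; ring
  have h3 : ((p : ℤ)) ^ (j + k) = ((p ^ (j + k) : ℕ) : ℤ) := by push_cast; ring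
  rw [h1, h2, h3, ← Int.natCast_div, ← Int.natCast_div, ← Int.natCast_div,
    Nat.div_div_eq_div_mul, pow_add]

private lemma ediv_pow_succ {n : ℤ} (hn : 0 ≤ n) (j : ℕ) :
    n / (p : ℤ) ^ (j + 1) = n / (p : ℤ) ^ j / p := by
  rw [← ediv_pow_ediv hn j 1, pow_one]

private lemma ediv_pow_succ' {n : ℤ} (hn : 0 ≤ n) (j : ℕ) :
    n / (p : ℤ) ^ (j + 1) = n / p / (p : ℤ) ^ j := by
  have h := ediv_pow_ediv (p := p) hn 1 j
  rw [pow_one] at h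
  rw [show j + 1 = 1 + j from Nat.add_comm j 1, ← h]

private lemma lt_pow_of_toNat_lt (hp : 2 ≤ p) {n : ℤ} (hn : 0 ≤ n) {k : ℕ}
    (hk : n.toNat < k) : n < (p : ℤ) ^ k := by
  have h1 : n.toNat < 2 ^ k := lt_of_lt_of_le hk (Nat.le_of_lt (Nat.lt_two_pow_self))
  have h2 : (2 : ℕ) ^ k ≤ p ^ k := Nat.pow_le_pow_left hp k
  have h3 : n.toNat < p ^ k := lt_of_lt_of_le h1 h2
  have h4 : (n.toNat : ℤ) < ((p ^ k : ℕ) : ℤ) := by exact_mod_cast h3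
  rwa [Int.toNat_of_nonneg hn, Nat.cast_pow] at h4

private lemma sum_digits_range (hp : 2 ≤ p) {n : ℤ} (hn : 0 ≤ n) (N : ℕ) :
    ∑ k ∈ Finset.range N, (p : ℤ) ^ k * (n / (p : ℤ) ^ k % p) =
      n - (p : ℤ) ^ N * (n / (p : ℤ) ^ N) := by
  induction N with
  | zero => simp
  | succ N ih =>
    rw [Finset.sum_range_succ, ih]
    have h1 : n / (p : ℤ) ^ (N + 1) = n / (p : ℤ) ^ N / p := ediv_pow_succ hn N
    have h2 : n / (p : ℤ) ^ N % p + p * (n / (p : ℤ) ^ N / p) = n / (p : ℤ) ^ N :=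
      Int.emod_add_mul_ediv _ _
    rw [h1]
    linear_combination ((p : ℤ) ^ N) * h2

private lemma expand_digits (hp : 2 ≤ p) {n : ℤ} (hn : 0 ≤ n) :
    ∑ᶠ k : ℕ, (p : ℤ) ^ k * (n / (p : ℤ) ^ k % p) = n := by
  have hsub : Function.support (fun k : ℕ => (p : ℤ) ^ k * (n / (p : ℤ) ^ k % p)) ⊆
      ↑(Finset.range (n.toNat + 1)) := by
    intro k hk
    simp only [Function.mem_support] at hk
    simp only [Finset.coe_range, Set.mem_Iio]
    by_contra hc
    push_neg at hc
    have : n < (p : ℤ) ^ k := lt_pow_of_toNat_lt hp hn (by omega)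
    rw [Int.ediv_eq_zero_of_lt hn this] at hk
    simp at hk
  rw [finsum_eq_finset_sum_of_support_subset _ hsub, sum_digits_range hp hn]
  have : n < (p : ℤ) ^ (n.toNat + 1) := lt_pow_of_toNat_lt hp hn (by omega)
  rw [Int.ediv_eq_zero_of_lt hn this]
  ring

private lemma reconstruct (hp : 2 ≤ p) (N : ℕ) :
    ∀ (d : ℕ → ℤ) (m : ℤ), 0 ≤ m → (∀ j, 0 ≤ d j ∧ d j < p) →
      ((∑ j ∈ Finset.range N, (p : ℤ) ^ j * d j) + (p : ℤ) ^ N * m) / (p : ℤ) ^ N = m ∧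
      ∀ k < N, ((∑ j ∈ Finset.range N, (p : ℤ) ^ j * d j) + (p : ℤ) ^ N * m) / (p : ℤ) ^ k % p
        = d k := by
  induction N with
  | zero => exact fun d m hm hd => ⟨by simp, fun k hk => absurd hk (Nat.not_lt_zero k)⟩
  | succ N ih =>
    intro d m hm hd
    have hP : (0 : ℤ) < p := P_pos hp
    set n' : ℤ := (∑ j ∈ Finset.range N, (p : ℤ) ^ j * d (j + 1)) + (p : ℤ) ^ N * m with hn'
    have key : (∑ j ∈ Finset.range (N + 1), (p : ℤ) ^ j * d j) + (p : ℤ) ^ (N + 1) * m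
        = d 0 + p * n' := by
      rw [Finset.sum_range_succ']
      have hterm : ∀ j, (p : ℤ) ^ (j + 1) * d (j + 1) = p * ((p : ℤ) ^ j * d (j + 1)) :=
        fun j => by ring
      simp_rw [hterm]
      rw [← Finset.mul_sum, hn']
      ring
    obtain ⟨ih1, ih2⟩ := ih (fun j => d (j + 1)) m hm (fun j => hd (j + 1))
    have hn'0 : 0 ≤ n' := by
      apply add_nonneg
      · exact Finset.sum_nonneg fun j _ => mul_nonneg (pow_pos hP j).le (hd (j + 1)).1
      · exact mul_nonneg (pow_pos hP N).le hm
    have h0 : (0 : ℤ) ≤ d 0 + p * n' := add_nonneg (hd 0).1 (mul_nonneg hP.le hn'0)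
    have hdiv : (d 0 + p * n') / p = n' := by
      rw [Int.add_mul_ediv_left _ _ (ne_of_gt hP),
        Int.ediv_eq_zero_of_lt (hd 0).1 (hd 0).2, zero_add]
    constructor
    · rw [key, ediv_pow_succ' h0 N, hdiv, ih1]
    · intro k hk
      rcases k with _ | k
      · rw [key, pow_zero, Int.ediv_one, Int.add_mul_emod_self_left,
          Int.emod_eq_of_lt (hd 0).1 (hd 0).2]
      · rw [key, ediv_pow_succ' h0 k, hdiv]
        exact ih2 k (by omega)

end AuxInt

section AuxWeights

private lemma digit_nonneg {p : ℕ} (hp : 2 ≤ p) {I : Type*} (ζ : I → ℤ) (j : ℕ) (i : I) :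
    0 ≤ digit p j ζ i ∧ digit p j ζ i < p :=
  ⟨Int.emod_nonneg _ (ne_of_gt (P_pos hp)), Int.emod_lt_of_pos _ (P_pos hp)⟩

private lemma tailFrom_eq_ediv {p : ℕ} (hp : 2 ≤ p) {I : Type*} {ζ : I → ℤ}
    (hζ : dominant ζ) (j : ℕ) :
    tailFrom p j ζ = fun i => ζ i / (p : ℤ) ^ j := by
  funext i
  have h0 : 0 ≤ ζ i / (p : ℤ) ^ j := Int.ediv_nonneg (hζ i) (pow_pos (P_pos hp) j).le
  have hterm : ∀ k : ℕ, (p : ℤ) ^ k * digit p (j + k) ζ i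
      = (p : ℤ) ^ k * (ζ i / (p : ℤ) ^ j / (p : ℤ) ^ k % p) := by
    intro k
    rw [ediv_pow_ediv (hζ i) j k]
    rfl
  show (∑ᶠ k : ℕ, (p : ℤ) ^ k * digit p (j + k) ζ i) = _
  rw [finsum_congr hterm, expand_digits hp h0]

private lemma twist_zero {I : Type*} (p : ℕ) (ξ : AddMonoidAlgebra ℤ (I → ℤ)) :
    twist p 0 ξ = ξ := by
  unfold twist
  rw [AddMonoidAlgebra.mapDomainRingHom_apply]
  have h : ⇑(AddMonoidHom.mk' (fun l : I → ℤ => ((p : ℤ) ^ 0) • l) (fun a b => smul_add _ a b))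
      = id := by
    funext l
    simp
  show AddMonoidAlgebra.ofCoeff (Finsupp.mapDomain _ ξ.coeff) = ξ
  rw [h, Finsupp.mapDomain_id]

private lemma twist_twist {I : Type*} (p a b : ℕ) (ξ : AddMonoidAlgebra ℤ (I → ℤ)) :
    twist p a (twist p b ξ) = twist p (a + b) ξ := by
  unfold twist
  simp only [AddMonoidAlgebra.mapDomainRingHom_apply]
  show AddMonoidAlgebra.ofCoeff (Finsupp.mapDomain _ (Finsupp.mapDomain _ ξ.coeff))
    = AddMonoidAlgebra.ofCoeff (Finsupp.mapDomain _ ξ.coeff)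
  rw [← Finsupp.mapDomain_comp]
  congr 2
  funext l
  show ((p : ℤ) ^ a) • (((p : ℤ) ^ b) • l) = ((p : ℤ) ^ (a + b)) • l
  rw [smul_smul, pow_add]

end AuxWeights

/-- assume `{S⁰_μ}` linearly independent, `S¹_ζ = Σ_μ x_{μ,ζ} S⁰_μ`
(with `x` finitely supported and supported on `X^{++}`), and the factorization
`S¹_ζ = S¹_{ζ^0+pρ}·(S⁰_{ζ^1+pζ^2+⋯})^{(1)}` whenever `ζ^1+pζ^2+⋯ ∈ X^{++}`.
Then for all `h ≥ 1` and `ζ ∈ X^+` with `ζ^h + pζ^{h+1} + ⋯ ∈ X^{++}`: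
`S^h_ζ = S¹_{ζ^0+pρ}·(S¹_{ζ^1+pρ})^{(1)} ⋯ (S¹_{ζ^{h−1}+pρ})^{(h−1)} · (S⁰_{ζ^h+pζ^{h+1}+⋯})^{(h)}`. -/
theorem Sh_factorization {I : Type*} [Fintype I] (p : ℕ) (hp : 2 ≤ p)
    (x : (I → ℤ) → (I → ℤ) → ℤ)
    (S0 S1 : (I → ℤ) → AddMonoidAlgebra ℤ (I → ℤ))
    (hS0 : LinearIndependent ℤ (fun μ : {μ : I → ℤ // strictDom μ} => S0 μ.1))
    (hxfin : ∀ ζ : I → ℤ, (Function.support fun μ => x μ ζ).Finite)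
    (hxsupp : ∀ μ ζ : I → ℤ, x μ ζ ≠ 0 → strictDom μ)
    (hx : ∀ ζ : I → ℤ, strictDom ζ → S1 ζ = ∑ᶠ μ : I → ℤ, x μ ζ • S0 μ)
    (hfact : ∀ ζ : I → ℤ, dominant ζ → strictDom (tailFrom p 1 ζ) →
      S1 ζ = S1 (digit p 0 ζ + (p : ℤ) • rho) * twist p 1 (S0 (tailFrom p 1 ζ)))
    (h : ℕ) (hh : 1 ≤ h) (ζ : I → ℤ) (hζ : dominant ζ)
    (htail : strictDom (tailFrom p h ζ)) :
    Sh p x S1 h ζ =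
      (∏ j ∈ Finset.range h, twist p j (S1 (digit p j ζ + (p : ℤ) • rho))) *
        twist p h (S0 (tailFrom p h ζ)) := by
  obtain ⟨n, rfl⟩ : ∃ n, h = n + 1 := ⟨h - 1, by omega⟩
  clear hh
  induction n generalizing ζ with
  | zero =>
    show S1 ζ = _
    rw [Finset.prod_range_one, twist_zero]
    exact hfact ζ hζ htail
  | succ m ih =>
    have hP : (0 : ℤ) < (p : ℤ) := P_pos hp
    set τ := tailFrom p (m + 1) ζ with hτdef
    have hτe : τ = fun i => ζ i / (p : ℤ) ^ (m + 1) := tailFrom_eq_ediv hp hζ (m + 1)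
    have hτdom : dominant τ := by
      intro i
      rw [hτe]
      exact Int.ediv_nonneg (hζ i) (pow_pos hP _).le
    have htail2 : tailFrom p (m + 1 + 1) ζ = fun i => ζ i / (p : ℤ) ^ (m + 1 + 1) :=
      tailFrom_eq_ediv hp hζ (m + 1 + 1)
    have hsplit : ∀ i, ζ i / (p : ℤ) ^ (m + 1 + 1) = ζ i / (p : ℤ) ^ (m + 1) / p :=
      fun i => ediv_pow_succ (hζ i) (m + 1)
    have hτstrict : strictDom τ := by
      intro i
      rw [hτe]
      have h1 : 1 ≤ ζ i / (p : ℤ) ^ (m + 1 + 1) := by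
        have := htail i
        rwa [htail2] at this
      have h3 : ζ i / (p : ℤ) ^ (m + 1) / p ≤ ζ i / (p : ℤ) ^ (m + 1) :=
        Int.ediv_le_self _ (Int.ediv_nonneg (hζ i) (pow_pos hP _).le)
      rw [hsplit i] at h1
      linarith
    have hd0τ : digit p 0 τ = digit p (m + 1) ζ := by
      funext i
      show τ i / (p : ℤ) ^ 0 % p = ζ i / (p : ℤ) ^ (m + 1) % p
      rw [hτe, pow_zero, Int.ediv_one]
    have ht1τ : tailFrom p 1 τ = tailFrom p (m + 1 + 1) ζ := by
      rw [tailFrom_eq_ediv hp hτdom 1, htail2]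
      funext i
      rw [hτe, pow_one]
      exact (hsplit i).symm
    have hτtailstrict : strictDom (tailFrom p 1 τ) := by
      rw [ht1τ]
      exact htail
    set c : (I → ℤ) → ℤ := fun μ => x μ τ with hc
    set Pprod := ∏ j ∈ Finset.range (m + 1), twist p j (S1 (digit p j ζ + (p : ℤ) • rho))
      with hPprod
    have hterm : ∀ μ : I → ℤ, c μ • Sh p x S1 (m + 1)
          ((∑ j ∈ Finset.range (m + 1), (p : ℤ) ^ j • digit p j ζ) + (p : ℤ) ^ (m + 1) • μ)
        = c μ • (Pprod * twist p (m + 1) (S0 μ)) := by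
      intro μ
      by_cases hcμ : c μ = 0
      · rw [hcμ, zero_smul, zero_smul]
      · have hμs : strictDom μ := hxsupp μ τ hcμ
        set ζ' : I → ℤ :=
          (∑ j ∈ Finset.range (m + 1), (p : ℤ) ^ j • digit p j ζ) + (p : ℤ) ^ (m + 1) • μ
          with hζ'def
        have hζ'i : ∀ i, ζ' i =
            (∑ j ∈ Finset.range (m + 1), (p : ℤ) ^ j * digit p j ζ i) + (p : ℤ) ^ (m + 1) * μ i := by
          intro i
          simp [hζ'def, Finset.sum_apply, Pi.add_apply, Pi.smul_apply, smul_eq_mul]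
        have hrec := fun i => reconstruct hp (m + 1) (fun j => digit p j ζ i) (μ i)
          (le_trans zero_le_one (hμs i)) (fun j => digit_nonneg hp ζ j i)
        have hζ'dom : dominant ζ' := by
          intro i
          rw [hζ'i i]
          apply add_nonneg
          · exact Finset.sum_nonneg fun j _ =>
              mul_nonneg (pow_pos hP j).le (digit_nonneg hp ζ j i).1
          · exact mul_nonneg (pow_pos hP _).le (le_trans zero_le_one (hμs i))
        have hdigζ' : ∀ j < m + 1, digit p j ζ' = digit p j ζ := by
          intro j hj
          funext i
          show ζ' i / (p : ℤ) ^ j % p = digit p j ζ i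
          rw [hζ'i i]
          exact (hrec i).2 j hj
        have htailζ' : tailFrom p (m + 1) ζ' = μ := by
          rw [tailFrom_eq_ediv hp hζ'dom (m + 1)]
          funext i
          show ζ' i / (p : ℤ) ^ (m + 1) = μ i
          rw [hζ'i i]
          exact (hrec i).1
        have hIH := ih ζ' hζ'dom (by rw [htailζ']; exact hμs)
        rw [hIH, htailζ']
        congr 2
        rw [hPprod]
        exact Finset.prod_congr rfl fun j hj => by
          rw [hdigζ' j (Finset.mem_range.mp hj)]
    have hSh : Sh p x S1 (m + 1 + 1) ζ = ∑ᶠ μ : I → ℤ, c μ • Sh p x S1 (m + 1)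
        ((∑ j ∈ Finset.range (m + 1), (p : ℤ) ^ j • digit p j ζ) + (p : ℤ) ^ (m + 1) • μ) := rfl
    have hsupfin : (Function.support c).Finite := hxfin τ
    have hsub : ∀ (g : (I → ℤ) → AddMonoidAlgebra ℤ (I → ℤ)),
        (Function.support fun μ => c μ • g μ).Finite := by
      intro g
      apply hsupfin.subset
      intro μ hμ
      simp only [Function.mem_support] at hμ ⊢
      intro h0
      exact hμ (by rw [h0, zero_smul])
    have hT : ∀ μ : I → ℤ, c μ • (Pprod * twist p (m + 1) (S0 μ))
        = Pprod * twist p (m + 1) (c μ • S0 μ) := by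
      intro μ
      rw [map_zsmul (twist p (m + 1)) (c μ) (S0 μ), mul_smul_comm]
    have hfin2 : (Function.support fun μ : I → ℤ => twist p (m + 1) (c μ • S0 μ)).Finite := by
      apply hsupfin.subset
      intro μ hμ
      simp only [Function.mem_support] at hμ ⊢
      intro h0
      exact hμ (by rw [h0, zero_smul, map_zero])
    have hmapfin : (∑ᶠ μ : I → ℤ, twist p (m + 1) (c μ • S0 μ))
        = twist p (m + 1) (∑ᶠ μ : I → ℤ, c μ • S0 μ) :=
      (AddMonoidHom.map_finsum (twist p (m + 1)).toAddMonoidHom (hsub S0)).symm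
    show Sh p x S1 (m + 1 + 1) ζ = _
    rw [hSh, finsum_congr hterm, finsum_congr hT, ← mul_finsum' _ Pprod hfin2, hmapfin,
      ← hx τ hτstrict, hfact τ hτdom hτtailstrict, map_mul, twist_twist, hd0τ, ht1τ,
      Finset.prod_range_succ, mul_assoc]
end

section
/- Under the hypotheses of Proposition 7 (i.e. S_ζ = S^{k+1}_ζ for ζ ∈ X^+_k), one has the closed formula: for k ≥ 0 and ζ ∈ X^+_k, S_ζ = Σ_{μ_0, μ_1, …, μ_k ∈ X^{++}} x_{μ_k, ζ^k} · x_{μ_{k−1}, ζ^{k−1}+pμ_k} ⋯ x_{μ_1, ζ^1+pμ_2} · x_{μ_0, ζ^0+pμ_1} · S⁰_{μ_0}. -/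
open Finset

section Aux

lemma hPgt {p : ℕ} (hp : 2 ≤ p) : (1:ℤ) < (p:ℤ) := by
  have : (2:ℤ) ≤ (p:ℤ) := by exact_mod_cast hp
  omega

lemma my_ediv_ediv (a b c : ℤ) (hb : 0 < b) (hc : 0 < c) : a / b / c = a / (b * c) := by
  have e2 := Int.emod_add_mul_ediv (a / b) c
  have h1 : a = (a % b + b * ((a / b) % c)) + (b * c) * (a / b / c) := by
    calc a = a % b + b * (a / b) := (Int.emod_add_mul_ediv a b).symm
    _ = a % b + b * ((a / b) % c + c * (a / b / c)) := by rw [e2]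
    _ = (a % b + b * ((a / b) % c)) + (b * c) * (a / b / c) := by ring
  have hs1 : 0 ≤ a % b + b * ((a / b) % c) :=
    add_nonneg (Int.emod_nonneg a hb.ne') (mul_nonneg hb.le (Int.emod_nonneg _ hc.ne'))
  have hs2 : a % b + b * ((a / b) % c) < b * c := by
    have h2 : a % b < b := Int.emod_lt_of_pos a hb
    have h3 : (a / b) % c ≤ c - 1 := by
      have := Int.emod_lt_of_pos (a / b) hc; omega
    have h4 : b * ((a / b) % c) ≤ b * (c - 1) := mul_le_mul_of_nonneg_left h3 hb.le
    nlinarith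
  symm
  calc a / (b * c) = ((a % b + b * ((a / b) % c)) + (b * c) * (a / b / c)) / (b * c) := by
        rw [← h1]
    _ = (a % b + b * ((a / b) % c)) / (b * c) + a / b / c :=
        Int.add_mul_ediv_left _ _ (by positivity)
    _ = a / b / c := by rw [Int.ediv_eq_zero_of_lt hs1 hs2, zero_add]

lemma expand_aux {p : ℕ} (hp : 2 ≤ p) (n : ℤ) (N : ℕ) :
    ∑ m ∈ range N, (p:ℤ) ^ m * ((n / (p:ℤ) ^ m) % p) = n - (p:ℤ) ^ N * (n / (p:ℤ) ^ N) := by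
  have hP : (0:ℤ) < (p:ℤ) := by have := hPgt hp; omega
  induction N with
  | zero => simp [Int.ediv_one]
  | succ N ih =>
    rw [Finset.sum_range_succ, ih]
    have key : n / (p:ℤ) ^ (N + 1) = (n / (p:ℤ) ^ N) / (p:ℤ) := by
      rw [my_ediv_ediv _ _ _ (pow_pos hP N) hP, ← pow_succ]
    rw [key, Int.emod_def]
    ring

lemma expand {p : ℕ} (hp : 2 ≤ p) (n : ℤ) (hn : 0 ≤ n) :
    ∑ᶠ m : ℕ, (p:ℤ) ^ m * ((n / (p:ℤ) ^ m) % p) = n := by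
  have hP := hPgt hp
  obtain ⟨N, hN⟩ := pow_unbounded_of_one_lt n hP
  have hsub : (Function.support fun m : ℕ => (p:ℤ) ^ m * ((n / (p:ℤ) ^ m) % p)) ⊆
      ↑(Finset.range N) := by
    intro m hm
    simp only [Finset.coe_range, Set.mem_Iio]
    by_contra h
    push_neg at h
    have hle : (p:ℤ) ^ N ≤ (p:ℤ) ^ m := pow_le_pow_right₀ (by omega) h
    have : n / (p:ℤ) ^ m = 0 := Int.ediv_eq_zero_of_lt hn (lt_of_lt_of_le hN hle)
    apply hm
    simp [this]
  rw [finsum_eq_finset_sum_of_support_subset _ hsub, expand_aux hp,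
    Int.ediv_eq_zero_of_lt hn hN, mul_zero, sub_zero]

lemma peel {p : ℕ} (e : ℕ → ℤ) (m K : ℕ) (t : ℤ) :
    ∑ j ∈ range (K+1), (p:ℤ) ^ j * e (m + j) + (p:ℤ) ^ (K+1) * t
      = e m + (p:ℤ) * (∑ j ∈ range K, (p:ℤ) ^ j * e (m + 1 + j) + (p:ℤ) ^ K * t) := by
  rw [Finset.sum_range_succ', mul_add, Finset.mul_sum]
  have hcongr : ∑ j ∈ range K, (p:ℤ) * ((p:ℤ) ^ j * e (m + 1 + j)) =
      ∑ j ∈ range K, (p:ℤ) ^ (j + 1) * e (m + (j + 1)) := by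
    refine Finset.sum_congr rfl fun j _ => ?_
    rw [show m + 1 + j = m + (j + 1) by omega]; ring
  rw [hcongr]
  simp only [Nat.add_zero, pow_zero, one_mul]
  ring

lemma split_expansion {p : ℕ} (hp : 2 ≤ p) (e : ℕ → ℤ) (he : ∀ j, 0 ≤ e j ∧ e j < (p:ℤ))
    (k : ℕ) (t : ℤ) : ∀ m, m ≤ k →
    (∑ j ∈ range k, (p:ℤ) ^ j * e j + (p:ℤ) ^ k * t) / (p:ℤ) ^ m =
      ∑ j ∈ range (k - m), (p:ℤ) ^ j * e (m + j) + (p:ℤ) ^ (k - m) * t := by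
  have hP : (0:ℤ) < (p:ℤ) := by have := hPgt hp; omega
  intro m
  induction m with
  | zero =>
    intro _
    simp [Int.ediv_one]
  | succ m ih =>
    intro hm
    have hmk : m ≤ k := by omega
    have step : (∑ j ∈ range k, (p:ℤ) ^ j * e j + (p:ℤ) ^ k * t) / (p:ℤ) ^ (m + 1)
        = ((∑ j ∈ range k, (p:ℤ) ^ j * e j + (p:ℤ) ^ k * t) / (p:ℤ) ^ m) / (p:ℤ) := by
      rw [my_ediv_ediv _ _ _ (pow_pos hP m) hP, ← pow_succ]
    rw [step, ih hmk]
    have hK : k - m = (k - (m + 1)) + 1 := by omega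
    rw [hK, peel, Int.add_mul_ediv_left _ _ (by omega : (p:ℤ) ≠ 0),
      Int.ediv_eq_zero_of_lt (he m).1 (he m).2, zero_add]

lemma digit_of_expansion {p : ℕ} (hp : 2 ≤ p) (e : ℕ → ℤ) (he : ∀ j, 0 ≤ e j ∧ e j < (p:ℤ))
    (k : ℕ) (t : ℤ) {m : ℕ} (hm : m ≤ k) :
    ((∑ j ∈ range (k+1), (p:ℤ) ^ j * e j + (p:ℤ) ^ (k+1) * t) / (p:ℤ) ^ m) % (p:ℤ) = e m := by
  rw [split_expansion hp e he (k+1) t m (by omega),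
    show k + 1 - m = (k - m) + 1 by omega, peel, Int.add_mul_emod_self_left]
  exact Int.emod_eq_of_lt (he m).1 (he m).2

lemma top_ediv_of_expansion {p : ℕ} (hp : 2 ≤ p) (e : ℕ → ℤ)
    (he : ∀ j, 0 ≤ e j ∧ e j < (p:ℤ)) (k : ℕ) (t : ℤ) :
    (∑ j ∈ range (k+1), (p:ℤ) ^ j * e j + (p:ℤ) ^ (k+1) * t) / (p:ℤ) ^ k
      = e k + (p:ℤ) * t := by
  rw [split_expansion hp e he (k+1) t k (by omega), show k + 1 - k = 1 by omega]
  simp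

lemma digit_bounds {p : ℕ} (hp : 2 ≤ p) {I : Type*} (ζ : I → ℤ) (j : ℕ) (i : I) :
    0 ≤ digit p j ζ i ∧ digit p j ζ i < (p:ℤ) := by
  have hP : (0:ℤ) < (p:ℤ) := by have := hPgt hp; omega
  exact ⟨Int.emod_nonneg _ hP.ne', Int.emod_lt_of_pos _ hP⟩

lemma tail_eq_ediv {p : ℕ} (hp : 2 ≤ p) {I : Type*} (ζ : I → ℤ) (hζ : dominant ζ) (j : ℕ) :
    tailFrom p j ζ = fun i => ζ i / (p:ℤ) ^ j := by
  have hP : (0:ℤ) < (p:ℤ) := by have := hPgt hp; omega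
  funext i
  show ∑ᶠ m : ℕ, (p:ℤ) ^ m * digit p (j + m) ζ i = ζ i / (p:ℤ) ^ j
  have h1 : ∀ m : ℕ, digit p (j + m) ζ i = ((ζ i / (p:ℤ) ^ j) / (p:ℤ) ^ m) % (p:ℤ) := by
    intro m
    show (ζ i / (p:ℤ) ^ (j + m)) % (p:ℤ) = _
    rw [my_ediv_ediv _ _ _ (pow_pos hP j) (pow_pos hP m), ← pow_add]
  simp_rw [h1]
  exact expand hp _ (Int.ediv_nonneg (hζ i) (pow_nonneg hP.le j))

lemma tail_eq_digit {p : ℕ} {I : Type*} {ζ : I → ℤ} {k : ℕ}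
    (hzero : ∀ j, k < j → digit p j ζ = 0) : tailFrom p k ζ = digit p k ζ := by
  funext i
  show ∑ᶠ m : ℕ, (p:ℤ) ^ m * digit p (k + m) ζ i = digit p k ζ i
  rw [finsum_eq_single _ 0 ?_]
  · simp
  · intro m hm
    have : digit p (k + m) ζ = 0 := hzero (k + m) (by omega)
    rw [this]
    simp

/-- The iterated coefficient `x_{μ_k, t} · ∏_{j<k} x_{μ_j, d_j + p μ_{j+1}}`. -/
def Coef {I : Type*} (p : ℕ) (x : (I → ℤ) → (I → ℤ) → ℤ) (d : ℕ → I → ℤ) (k : ℕ)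
    (t : I → ℤ) (μ : Fin (k+1) → (I → ℤ)) : ℤ :=
  x (μ (Fin.last k)) t * ∏ j : Fin k, x (μ j.castSucc) (d j.1 + (p:ℤ) • μ j.succ)

lemma Coef_succ {I : Type*} (p : ℕ) (x : (I → ℤ) → (I → ℤ) → ℤ) (d : ℕ → I → ℤ) (k : ℕ)
    (t : I → ℤ) (μ : Fin (k+2) → (I → ℤ)) :
    Coef p x d (k+1) t μ = x (μ (Fin.last (k+1))) t *
      Coef p x d k (d k + (p:ℤ) • μ (Fin.last (k+1))) (Fin.init μ) := by
  unfold Coef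
  rw [Fin.prod_univ_castSucc]
  simp only [Fin.init, Fin.coe_castSucc, Fin.succ_last, Fin.succ_castSucc, Fin.val_last]
  ring

lemma Coef_congr {I : Type*} (p : ℕ) (x : (I → ℤ) → (I → ℤ) → ℤ) (d d' : ℕ → I → ℤ) (k : ℕ)
    (t : I → ℤ) (h : ∀ j, j < k → d j = d' j) : Coef p x d k t = Coef p x d' k t := by
  funext μ
  unfold Coef
  congr 1
  exact Finset.prod_congr rfl fun j _ => by rw [h j.1 j.2]

lemma Coef_supp_finite {I : Type*} (p : ℕ) (x : (I → ℤ) → (I → ℤ) → ℤ)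
    (hxfin : ∀ ζ : I → ℤ, (Function.support fun μ => x μ ζ).Finite) (d : ℕ → I → ℤ) :
    ∀ (k : ℕ) (t : I → ℤ), (Function.support (Coef p x d k t)).Finite := by
  intro k
  induction k with
  | zero =>
    intro t
    have hsub : Function.support (Coef p x d 0 t) ⊆
        (fun v => (fun _ => v : Fin 1 → (I → ℤ))) '' (Function.support fun μ => x μ t) := by
      intro μ hμ
      have hx0 : x (μ 0) t ≠ 0 := by
        simp only [Function.mem_support, Coef] at hμ
        intro h
        apply hμ
        rw [show (Fin.last 0) = 0 from rfl, h, zero_mul]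
      refine ⟨μ 0, hx0, ?_⟩
      funext i
      rw [Subsingleton.elim i 0]
    exact ((hxfin t).image _).subset hsub
  | succ k ih =>
    intro t
    have hsub : Function.support (Coef p x d (k+1) t) ⊆
        ⋃ ν ∈ Function.support (fun v => x v t),
          (fun μ : Fin (k+1) → (I → ℤ) => Fin.snoc μ ν) ''
            Function.support (Coef p x d k (d k + (p:ℤ) • ν)) := by
      intro μ' hμ'
      rw [Function.mem_support, Coef_succ] at hμ'
      have h1 : x (μ' (Fin.last (k+1))) t ≠ 0 := left_ne_zero_of_mul hμ'
      have h2 : Coef p x d k (d k + (p:ℤ) • μ' (Fin.last (k+1))) (Fin.init μ') ≠ 0 :=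
        right_ne_zero_of_mul hμ'
      exact Set.mem_biUnion h1 ⟨Fin.init μ', h2, Fin.snoc_init_self μ'⟩
    exact (Set.Finite.biUnion (hxfin t) fun ν _ => (ih _).image _).subset hsub

/-- Peeling off the last coordinate of a tuple. -/
def snocEquiv {X : Type*} (k : ℕ) : (X × (Fin (k+1) → X)) ≃ (Fin (k+2) → X) where
  toFun q := Fin.snoc q.2 q.1
  invFun μ := (μ (Fin.last (k+1)), Fin.init μ)
  left_inv q := by simp
  right_inv μ := Fin.snoc_init_self μ


lemma digits_sum_bound {p : ℕ} (hp : 2 ≤ p) (e : ℕ → ℤ) (he : ∀ j, 0 ≤ e j ∧ e j < (p:ℤ))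
    (k : ℕ) :
    0 ≤ ∑ j ∈ range k, (p:ℤ) ^ j * e j ∧ ∑ j ∈ range k, (p:ℤ) ^ j * e j < (p:ℤ) ^ k := by
  have hP : (0:ℤ) < (p:ℤ) := by have := hPgt hp; omega
  constructor
  · exact Finset.sum_nonneg fun j _ => mul_nonneg (pow_nonneg hP.le j) (he j).1
  · have h1 : ∑ j ∈ range k, (p:ℤ) ^ j * e j ≤ ∑ j ∈ range k, (p:ℤ) ^ j * ((p:ℤ) - 1) :=
      Finset.sum_le_sum fun j _ => mul_le_mul_of_nonneg_left (by have := (he j).2; omega)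
        (pow_nonneg hP.le j)
    have h2 : ∑ j ∈ range k, (p:ℤ) ^ j * ((p:ℤ) - 1) = (p:ℤ) ^ k - 1 := by
      rw [← Finset.sum_mul, geom_sum_mul]
    omega

lemma key {I : Type*} (p : ℕ) (hp : 2 ≤ p)
    (x : (I → ℤ) → (I → ℤ) → ℤ)
    (S0 S1 : (I → ℤ) → AddMonoidAlgebra ℤ (I → ℤ))
    (hxfin : ∀ ζ : I → ℤ, (Function.support fun μ => x μ ζ).Finite)
    (hxsupp : ∀ μ ζ : I → ℤ, x μ ζ ≠ 0 → strictDom μ)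
    (hx : ∀ ζ : I → ℤ, strictDom ζ → S1 ζ = ∑ᶠ μ : I → ℤ, x μ ζ • S0 μ) :
    ∀ (k : ℕ) (ζ : I → ℤ), dominant ζ → strictDom (tailFrom p k ζ) →
      Sh p x S1 (k+1) ζ = ∑ᶠ μ : Fin (k+1) → (I → ℤ),
        Coef p x (fun j => digit p j ζ) k (tailFrom p k ζ) μ • S0 (μ 0) := by
  intro k
  induction k with
  | zero =>
    intro ζ hdom htail
    have hzt : tailFrom p 0 ζ = ζ := by
      rw [tail_eq_ediv hp ζ hdom 0]; funext i; simp
    rw [hzt] at htail ⊢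
    show S1 ζ = _
    rw [hx ζ htail]
    rw [← finsum_comp_equiv ((Equiv.funUnique (Fin 1) (I → ℤ)).symm)]
    refine finsum_congr fun v => ?_
    simp [Coef, Equiv.funUnique]
  | succ k ih =>
    intro ζ hdom htail
    have hP : (0:ℤ) < (p:ℤ) := by have := hPgt hp; omega
    set d : ℕ → I → ℤ := fun j => digit p j ζ with hd
    set T : I → ℤ := tailFrom p (k+1) ζ with hT
    set zeta' : (I → ℤ) → (I → ℤ) := fun ν =>
      (∑ j ∈ Finset.range (k+1), (p:ℤ) ^ j • digit p j ζ) + (p:ℤ) ^ (k+1) • ν with hz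
    have hz_apply : ∀ (ν : I → ℤ) (i : I), zeta' ν i
        = ∑ j ∈ Finset.range (k+1), (p:ℤ) ^ j * digit p j ζ i + (p:ℤ) ^ (k+1) * ν i := by
      intro ν i
      simp [hz, Finset.sum_apply, Pi.smul_apply, smul_eq_mul]
    have he : ∀ i : I, ∀ j : ℕ, 0 ≤ digit p j ζ i ∧ digit p j ζ i < (p:ℤ) :=
      fun i j => digit_bounds hp ζ j i
    have hfacts : ∀ ν : I → ℤ, strictDom ν → dominant (zeta' ν) ∧
        tailFrom p k (zeta' ν) = d k + (p:ℤ) • ν ∧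
        (∀ j, j < k+1 → digit p j (zeta' ν) = d j) := by
      intro ν hν
      have hdom' : dominant (zeta' ν) := by
        intro i
        rw [hz_apply]
        have h1 : 0 ≤ ∑ j ∈ range (k+1), (p:ℤ) ^ j * digit p j ζ i :=
          (digits_sum_bound hp _ (he i) (k+1)).1
        have h2 : (1:ℤ) ≤ ν i := hν i
        nlinarith [pow_pos hP (k+1)]
      refine ⟨hdom', ?_, ?_⟩
      · rw [tail_eq_ediv hp _ hdom' k]
        funext i
        show zeta' ν i / (p:ℤ) ^ k = (d k + (p:ℤ) • ν) i
        rw [hz_apply, top_ediv_of_expansion hp _ (he i)]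
        simp [hd, Pi.add_apply, Pi.smul_apply, smul_eq_mul]
      · intro j hj
        funext i
        show (zeta' ν i / (p:ℤ) ^ j) % (p:ℤ) = digit p j ζ i
        rw [hz_apply, digit_of_expansion hp _ (he i) k (ν i) (by omega : j ≤ k)]
    have hmain : ∀ ν : I → ℤ, x ν T • Sh p x S1 (k+1) (zeta' ν)
        = ∑ᶠ μ : Fin (k+1) → (I → ℤ),
            Coef p x d (k+1) T (Fin.snoc μ ν) • S0 ((Fin.snoc μ ν : Fin (k+2) → (I → ℤ)) 0) := by
      intro ν
      have hsnoc0 : ∀ μ : Fin (k+1) → (I → ℤ), (Fin.snoc μ ν : Fin (k+2) → (I → ℤ)) 0 = μ 0 := by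
        intro μ
        rw [show (0 : Fin (k+2)) = Fin.castSucc 0 by simp, Fin.snoc_castSucc]
      have hCsnoc : ∀ μ : Fin (k+1) → (I → ℤ), Coef p x d (k+1) T (Fin.snoc μ ν)
          = x ν T * Coef p x d k (d k + (p:ℤ) • ν) μ := by
        intro μ
        rw [Coef_succ]
        simp [Fin.snoc_last, Fin.init_snoc]
      by_cases hν : x ν T = 0
      · rw [hν, zero_smul]
        symm
        refine finsum_eq_zero_of_forall_eq_zero fun μ => ?_
        rw [hsnoc0, hCsnoc, hν, zero_mul, zero_smul]
      · have hsd : strictDom ν := hxsupp ν T hν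
        obtain ⟨hdom', htail', hdig⟩ := hfacts ν hsd
        have hsd' : strictDom (tailFrom p k (zeta' ν)) := by
          rw [htail']
          intro i
          have h1 := (he i k).1
          have h2 : (1:ℤ) ≤ ν i := hsd i
          have h3 : (p:ℤ) * 1 ≤ (p:ℤ) * ν i := mul_le_mul_of_nonneg_left h2 hP.le
          rw [mul_one] at h3
          simp only [Pi.add_apply, Pi.smul_apply, smul_eq_mul, hd]
          have hp2 : (2:ℤ) ≤ (p:ℤ) := by exact_mod_cast hp
          linarith
        rw [ih (zeta' ν) hdom' hsd', htail',
          Coef_congr p x _ d k _ (fun j hj => hdig j (by omega))]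
        have hsupp : (Function.support fun μ : Fin (k+1) → (I → ℤ) =>
            Coef p x d k (d k + (p:ℤ) • ν) μ • S0 (μ 0)).Finite := by
          refine (Coef_supp_finite p x hxfin d k (d k + (p:ℤ) • ν)).subset ?_
          intro μ hμ
          simp only [Function.mem_support] at hμ ⊢
          intro h
          exact hμ (by rw [h, zero_smul])
        rw [smul_finsum' _ hsupp]
        refine finsum_congr fun μ => ?_
        rw [hsnoc0, hCsnoc, mul_smul]
    have hsuppF : (Function.support fun q : (I → ℤ) × (Fin (k+1) → (I → ℤ)) =>
        Coef p x d (k+1) T (snocEquiv k q) • S0 ((snocEquiv k q) 0)).Finite := by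
      have h1 : (Function.support fun μ' : Fin (k+2) → (I → ℤ) =>
          Coef p x d (k+1) T μ' • S0 (μ' 0)).Finite := by
        refine (Coef_supp_finite p x hxfin d (k+1) T).subset ?_
        intro μ' hμ'
        simp only [Function.mem_support] at hμ' ⊢
        intro h
        exact hμ' (by rw [h, zero_smul])
      have : (Function.support fun q : (I → ℤ) × (Fin (k+1) → (I → ℤ)) =>
          Coef p x d (k+1) T (snocEquiv k q) • S0 ((snocEquiv k q) 0)) ⊆
          (snocEquiv k) ⁻¹' (Function.support fun μ' : Fin (k+2) → (I → ℤ) =>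
            Coef p x d (k+1) T μ' • S0 (μ' 0)) := by
        intro q hq
        exact hq
      exact (h1.preimage ((snocEquiv k).injective.injOn)).subset this
    calc Sh p x S1 (k+1+1) ζ = ∑ᶠ ν : I → ℤ, x ν T • Sh p x S1 (k+1) (zeta' ν) := rfl
    _ = ∑ᶠ (ν : I → ℤ) (μ : Fin (k+1) → (I → ℤ)),
          Coef p x d (k+1) T (Fin.snoc μ ν) • S0 ((Fin.snoc μ ν : Fin (k+2) → (I → ℤ)) 0) := finsum_congr hmain
    _ = ∑ᶠ q : (I → ℤ) × (Fin (k+1) → (I → ℤ)),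
          Coef p x d (k+1) T (snocEquiv k q) • S0 ((snocEquiv k q) 0) :=
        (finsum_curry _ hsuppF).symm
    _ = ∑ᶠ μ' : Fin (k+2) → (I → ℤ), Coef p x d (k+1) T μ' • S0 (μ' 0) :=
        finsum_comp_equiv (snocEquiv k)
          (f := fun μ' : Fin (k+2) → (I → ℤ) => Coef p x d (k+1) T μ' • S0 (μ' 0))

end Aux

/-- Corollary 8 of the paper: under the hypotheses of Proposition 7
(i.e. `S_ζ = S^{k+1}_ζ` for `ζ ∈ X^+_k`), for `k ≥ 0` and `ζ ∈ X^+_k` one has the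
closed formula
`S_ζ = Σ_{μ_0,…,μ_k ∈ X^{++}} x_{μ_k,ζ^k} x_{μ_{k−1},ζ^{k−1}+pμ_k} ⋯ x_{μ_1,ζ^1+pμ_2} x_{μ_0,ζ^0+pμ_1} S⁰_{μ_0}`
(the sum over tuples `(μ_0, …, μ_k)`, finite since `x` has finite support). -/

theorem cor8 {I : Type*} [Fintype I] (p : ℕ) (hp : 2 ≤ p)
    (x : (I → ℤ) → (I → ℤ) → ℤ)
    (S S0 S1 : (I → ℤ) → AddMonoidAlgebra ℤ (I → ℤ))
    (hS0 : LinearIndependent ℤ (fun μ : {μ : I → ℤ // strictDom μ} => S0 μ.1))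
    (hxfin : ∀ ζ : I → ℤ, (Function.support fun μ => x μ ζ).Finite)
    (hxsupp : ∀ μ ζ : I → ℤ, x μ ζ ≠ 0 → strictDom μ)
    (hx : ∀ ζ : I → ℤ, strictDom ζ → S1 ζ = ∑ᶠ μ : I → ℤ, x μ ζ • S0 μ)
    (hprop7 : ∀ (k : ℕ) (ζ : I → ℤ), dominant ζ → strictDom (digit p k ζ) →
      (∀ j, k < j → digit p j ζ = 0) → S ζ = Sh p x S1 (k + 1) ζ)
    (k : ℕ) (ζ : I → ℤ) (hζ : dominant ζ)
    (htop : strictDom (digit p k ζ))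
    (hzero : ∀ j, k < j → digit p j ζ = 0) :
    S ζ = ∑ᶠ μ : Fin (k + 1) → (I → ℤ),
      (x (μ (Fin.last k)) (digit p k ζ) *
        ∏ j : Fin k, x (μ j.castSucc) (digit p j.1 ζ + (p : ℤ) • μ j.succ)) • S0 (μ 0) := by
  have hT : tailFrom p k ζ = digit p k ζ := tail_eq_digit hzero
  rw [hprop7 k ζ hζ htop hzero,
    key p hp x S0 S1 hxfin hxsupp hx k ζ hζ (by rw [hT]; exact htop), hT]
  rfl
end
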